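/- Bridge perturbation lemma: let b ∈ ℤ, t ∈ ℂ, and suppose there exist c, d ∈ ℤ with π(c) = b, π(d) = b+1 and d < c ≤ b. Let Â be the k×n matrix (columns extended periodically) with Â_a = A_a for all a ≢ b (mod n) and Â_b = A_b + t·A_{b+1}. Then Â has rank k, and for every a ∈ ℤ the difference τ→(Â)_a − τ→(A)_a lies in span{ τ→(A)_p : p ∈ ℤ, a ⇒_π p }. -/

import Mathlib

open scoped BigOperators

/-- The columns of `A` are `n`-periodic. -/
def ColPeriodic (k n : ℕ) (A : ℤ → Fin k → ℂ) : Prop :=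
  ∀ a : ℤ, A (a + (n : ℤ)) = A a

/-- `A` has rank `k`, i.e. its columns span `ℂ^k`. -/
def FullRank (k : ℕ) (A : ℤ → Fin k → ℂ) : Prop :=
  Submodule.span ℂ (Set.range A) = ⊤

/-- The Gale (componentwise) partial order on finite subsets of `ℤ` of equal
cardinality: `B ≼ C` iff they have the same cardinality and, for each `i`, the
`i`-th smallest element of `B` is at most the `i`-th smallest element of `C`
(equivalently, the counting condition below). -/
def galeLE (B C : Finset ℤ) : Prop :=
  B.card = C.card ∧
    ∀ t : ℤ, (B.filter fun x => t ≤ x).card ≤ (C.filter fun x => t ≤ x).card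

/-- The columns of `A` indexed by `J` form a basis of `ℂ^k`. -/
def IsColBasis (k : ℕ) (A : ℤ → Fin k → ℂ) (J : Finset ℤ) : Prop :=
  J.card = k ∧ LinearIndependent ℂ (fun j : (J : Set ℤ) => A (j : ℤ)) ∧
    Submodule.span ℂ (A '' (J : Set ℤ)) = ⊤

/-- `I` is the `≼_a`-minimal `k`-element subset of `{a, a+1, …, a+n-1}` whose
columns form a basis of `ℂ^k` (the `a`-minimal basis `I→_a`). -/
def IsMinBasis (k n : ℕ) (A : ℤ → Fin k → ℂ) (a : ℤ) (I : Finset ℤ) : Prop :=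
  I ⊆ Finset.Ico a (a + (n : ℤ)) ∧ IsColBasis k A I ∧
    ∀ J : Finset ℤ, J ⊆ Finset.Ico a (a + (n : ℤ)) → IsColBasis k A J → galeLE I J

/-- `I` is the `≼_{a+1}`-maximal `k`-element subset of `{a-n+1, …, a}` whose
columns form a basis of `ℂ^k` (the `a`-maximal basis `I←_a`).  Note that on
representatives in `{a-n+1, …, a}` the cyclic order `≺_{a+1}` agrees with the
usual order of `ℤ`. -/
def IsMaxBasis (k n : ℕ) (A : ℤ → Fin k → ℂ) (a : ℤ) (I : Finset ℤ) : Prop :=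
  I ⊆ Finset.Ioc (a - (n : ℤ)) a ∧ IsColBasis k A I ∧
    ∀ J : Finset ℤ, J ⊆ Finset.Ioc (a - (n : ℤ)) a → IsColBasis k A J → galeLE J I

/-- The standard symmetric bilinear form `⟨x|y⟩ = ∑ i, x i * y i` on `ℂ^k`. -/
noncomputable def bil (k : ℕ) (x y : Fin k → ℂ) : ℂ := ∑ i, x i * y i

/-- `π` is the bounded affine permutation of `A`:
`π a` is the least `r` with `a ≤ r ≤ a + n` and `A a ∈ span(A (a+1), …, A r)`. -/
def IsBAP (k n : ℕ) (A : ℤ → Fin k → ℂ) (π : ℤ → ℤ) : Prop :=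
  ∀ a : ℤ,
    a ≤ π a ∧ π a ≤ a + (n : ℤ) ∧
    A a ∈ Submodule.span ℂ (A '' Set.Ioc a (π a)) ∧
    ∀ r : ℤ, a ≤ r → r ≤ a + (n : ℤ) →
      A a ∈ Submodule.span ℂ (A '' Set.Ioc a r) → π a ≤ r

/-- `T` is the right twist `τ→(A)`: for each `a`, the column `T a` pairs to `1`
with `A a` and to `0` with the other columns of the `a`-minimal basis. -/
def IsRightTwist (k n : ℕ) (A T : ℤ → Fin k → ℂ) : Prop :=
  ∀ (a : ℤ) (I : Finset ℤ), IsMinBasis k n A a I →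
    ∀ b ∈ I, bil k (T a) (A b) = if b = a then 1 else 0

/-- `T` is the left twist `τ←(A)`: for each `a`, the column `T a` pairs to `1`
with `A a` and to `0` with the other columns of the `a`-maximal basis. -/
def IsLeftTwist (k n : ℕ) (A T : ℤ → Fin k → ℂ) : Prop :=
  ∀ (a : ℤ) (I : Finset ℤ), IsMaxBasis k n A a I →
    ∀ b ∈ I, bil k (T a) (A b) = if b = a then 1 else 0

/-- `Δ_I(A)`, where `I = {i 0 < i 1 < ⋯ < i (k-1)}` is given by a strictly
monotone enumeration `i : Fin k → ℤ`: the determinant of the `k×k` matrix with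
columns `A (i 0), …, A (i (k-1))`. -/
noncomputable def Delta (k : ℕ) (A : ℤ → Fin k → ℂ) (i : Fin k → ℤ) : ℂ :=
  Matrix.det (Matrix.of fun r s : Fin k => A (i s) r)

noncomputable def bilL (k : ℕ) (v : Fin k → ℂ) : (Fin k → ℂ) →ₗ[ℂ] ℂ where
  toFun w := bil k v w
  map_add' x y := by simp [bil, mul_add, Finset.sum_add_distrib]
  map_smul' c x := by simp [bil, Finset.mul_sum]; ring_nf; simp [mul_comm, mul_left_comm]

lemma bil_span_zero {k : ℕ} {v : Fin k → ℂ} {s : Set (Fin k → ℂ)}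
    (h : ∀ w ∈ s, bil k v w = 0) {x : Fin k → ℂ}
    (hx : x ∈ Submodule.span ℂ s) : bil k v x = 0 := by
  have : Submodule.span ℂ s ≤ LinearMap.ker (bilL k v) := by
    rw [Submodule.span_le]; intro w hw; exact h w hw
  exact this hx

lemma bil_single {k : ℕ} (v : Fin k → ℂ) (i : Fin k) :
    bil k v (Pi.single i 1) = v i := by
  simp [bil, Pi.single_apply]

lemma eq_zero_of_bil {k : ℕ} {v : Fin k → ℂ} {s : Set (Fin k → ℂ)}
    (hspan : Submodule.span ℂ s = ⊤) (h : ∀ w ∈ s, bil k v w = 0) : v = 0 := by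
  funext i
  have := bil_span_zero h (x := Pi.single i 1) (by rw [hspan]; trivial)
  rwa [bil_single] at this

lemma bil_sub {k : ℕ} (v w x : Fin k → ℂ) :
    bil k (v - w) x = bil k v x - bil k w x := by
  simp [bil, sub_mul, Finset.sum_sub_distrib]

lemma bil_smul {k : ℕ} (c : ℂ) (v x : Fin k → ℂ) :
    bil k (c • v) x = c * bil k v x := by
  simp [bil, Finset.mul_sum, mul_assoc]

lemma dual_unique {k : ℕ} {A : ℤ → Fin k → ℂ} {J : Finset ℤ}
    (hJ : Submodule.span ℂ (A '' (J : Set ℤ)) = ⊤) {f : ℤ → ℂ} {v w : Fin k → ℂ}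
    (hv : ∀ j ∈ J, bil k v (A j) = f j) (hw : ∀ j ∈ J, bil k w (A j) = f j) :
    v = w := by
  have h0 : v - w = 0 := by
    apply eq_zero_of_bil hJ
    rintro x ⟨j, hj, rfl⟩
    rw [bil_sub, hv j (by exact_mod_cast hj), hw j (by exact_mod_cast hj), sub_self]
  exact sub_eq_zero.mp h0

noncomputable def psp (k : ℕ) (A : ℤ → Fin k → ℂ) (a r : ℤ) : Submodule ℂ (Fin k → ℂ) :=
  Submodule.span ℂ (A '' Set.Icc a r)

open scoped Classical in
noncomputable def gset (k n : ℕ) (A : ℤ → Fin k → ℂ) (a : ℤ) : Finset ℤ :=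
  (Finset.Ico a (a + (n : ℤ))).filter (fun j => A j ∉ psp k A a (j - 1))

lemma mem_gset {k n : ℕ} {A : ℤ → Fin k → ℂ} {a j : ℤ} :
    j ∈ gset k n A a ↔ a ≤ j ∧ j < a + (n : ℤ) ∧ A j ∉ psp k A a (j - 1) := by
  simp [gset, Finset.mem_filter, Finset.mem_Ico, and_assoc]

lemma psp_mono {k : ℕ} (A : ℤ → Fin k → ℂ) (a : ℤ) {r r' : ℤ} (h : r ≤ r') :
    psp k A a r ≤ psp k A a r' :=
  Submodule.span_mono (Set.image_mono (Set.Icc_subset_Icc_right h))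

lemma mem_psp_self {k : ℕ} (A : ℤ → Fin k → ℂ) {a j r : ℤ} (h1 : a ≤ j) (h2 : j ≤ r) :
    A j ∈ psp k A a r :=
  Submodule.subset_span ⟨j, ⟨h1, h2⟩, rfl⟩

lemma psp_bot {k : ℕ} (A : ℤ → Fin k → ℂ) {a r : ℤ} (h : r < a) :
    psp k A a r = ⊥ := by
  simp [psp, Set.Icc_eq_empty_of_lt h]

lemma psp_succ {k : ℕ} (A : ℤ → Fin k → ℂ) {a r : ℤ} (h : a - 1 ≤ r) :
    psp k A a (r + 1) = Submodule.span ℂ (insert (A (r+1)) (A '' Set.Icc a r)) := by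
  have : Set.Icc a (r + 1) = insert (r+1) (Set.Icc a r) := by
    ext x; simp [Set.mem_Icc]; omega
  rw [psp, this, Set.image_insert_eq]

@[simp] lemma psp_def {k : ℕ} (A : ℤ → Fin k → ℂ) (a r : ℤ) :
    psp k A a r = Submodule.span ℂ (A '' Set.Icc a r) := rfl

lemma psp_gspan {k n : ℕ} (A : ℤ → Fin k → ℂ) (a : ℤ) :
    ∀ r, a - 1 ≤ r → r ≤ a + (n : ℤ) - 1 →
    psp k A a r =
      Submodule.span ℂ (A '' (((gset k n A a).filter (fun j => j ≤ r)) : Set ℤ)) := by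
  refine Int.le_induction ?_ ?_
  · intro _
    rw [psp_bot A (by omega)]
    have : ((gset k n A a).filter (fun j => j ≤ a - 1)) = ∅ := by
      apply Finset.filter_false_of_mem
      intro j hj; have := mem_gset.mp hj; omega
    rw [this]; simp
  · intro r har ih hrn
    have ih' := ih (by omega)
    by_cases hm : r + 1 ∈ gset k n A a
    · have hfil : ((gset k n A a).filter (fun j => j ≤ r + 1)) =
          insert (r+1) ((gset k n A a).filter (fun j => j ≤ r)) := by
        ext j
        simp only [Finset.mem_filter, Finset.mem_insert]
        constructor
        · rintro ⟨hj, hle⟩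
          rcases eq_or_lt_of_le hle with h | h
          · exact Or.inl h
          · exact Or.inr ⟨hj, by omega⟩
        · rintro (rfl | ⟨hj, hle⟩)
          · exact ⟨hm, le_refl _⟩
          · exact ⟨hj, by omega⟩
      rw [hfil, Finset.coe_insert, Set.image_insert_eq, Submodule.span_insert,
        ← ih', psp_succ A (by omega), Submodule.span_insert, psp_def]
    · have hfil : ((gset k n A a).filter (fun j => j ≤ r + 1)) =
          ((gset k n A a).filter (fun j => j ≤ r)) := by
        ext j
        simp only [Finset.mem_filter]
        constructor
        · rintro ⟨hj, hle⟩
          refine ⟨hj, ?_⟩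
          rcases eq_or_lt_of_le hle with h | h
          · exact absurd (h ▸ hj) hm
          · omega
        · rintro ⟨hj, hle⟩; exact ⟨hj, by omega⟩
      have hin : A (r+1) ∈ psp k A a r := by
        by_contra hcon
        exact hm (mem_gset.mpr ⟨by omega, by omega, by
          have : r + 1 - 1 = r := by omega
          rwa [this]⟩)
      rw [hfil, ← ih', psp_succ A (by omega), Submodule.span_insert, psp_def,
        sup_eq_right.mpr]
      exact Submodule.span_le.mpr (Set.singleton_subset_iff.mpr hin)

lemma per_iter {k n : ℕ} {A : ℤ → Fin k → ℂ} (hper : ColPeriodic k n A) :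
    ∀ (s x : ℤ), A (x + s * n) = A x := by
  intro s
  induction s using Int.induction_on with
  | zero => simp
  | succ s ih =>
      intro x
      have h1 : x + ((s : ℤ) + 1) * n = (x + s * n) + n := by ring
      rw [h1, hper, ih]
  | pred s ih =>
      intro x
      have h1 : x + (-(s : ℤ) - 1) * n + (n : ℤ) = x + (-(s:ℤ)) * n := by ring
      have := hper (x + (-(s:ℤ) - 1) * n)
      rw [h1] at this
      exact this.symm.trans (ih x)

lemma psp_top {k n : ℕ} {A : ℤ → Fin k → ℂ} (hper : ColPeriodic k n A)
    (hrank : FullRank k A) (hn : 0 < n) (a : ℤ) :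
    psp k A a (a + (n : ℤ) - 1) = ⊤ := by
  rw [eq_top_iff, ← hrank]
  rw [Submodule.span_le]
  rintro x ⟨y, rfl⟩
  have hmod1 : 0 ≤ (y - a) % (n : ℤ) := Int.emod_nonneg _ (by exact_mod_cast hn.ne')
  have hmod2 : (y - a) % (n : ℤ) < n := Int.emod_lt_of_pos _ (by exact_mod_cast hn)
  have hy : y = (a + (y - a) % (n : ℤ)) + ((y - a) / (n : ℤ)) * n := by
    have := Int.mul_ediv_add_emod (y - a) (n : ℤ)
    linarith
  have h2 : A y = A (a + (y - a) % (n : ℤ)) := by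
    conv_lhs => rw [hy]
    rw [per_iter hper]
  rw [h2]
  exact mem_psp_self A (by omega) (by omega)

lemma gset_subset {k n : ℕ} (A : ℤ → Fin k → ℂ) (a : ℤ) :
    gset k n A a ⊆ Finset.Ico a (a + (n : ℤ)) := by
  intro j hj
  have := mem_gset.mp hj
  rw [Finset.mem_Ico]
  exact ⟨this.1, this.2.1⟩

lemma gset_indep_aux {k n : ℕ} (A : ℤ → Fin k → ℂ) (a : ℤ) :
    ∀ r, a - 1 ≤ r → r ≤ a + (n : ℤ) - 1 →
      Set.InjOn A (((gset k n A a).filter (fun j => j ≤ r)) : Set ℤ) ∧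
      LinearIndependent ℂ
        (fun x : (A '' (((gset k n A a).filter (fun j => j ≤ r)) : Set ℤ)) => (x : Fin k → ℂ)) := by
  refine Int.le_induction ?_ ?_
  · intro _
    have : ((gset k n A a).filter (fun j => j ≤ a - 1)) = ∅ := by
      apply Finset.filter_false_of_mem
      intro j hj; have := mem_gset.mp hj; omega
    rw [this]
    constructor
    · rw [Finset.coe_empty]
      exact Set.injOn_empty A
    · have he : (A '' ((∅ : Finset ℤ) : Set ℤ)) = ∅ := by simp
      rw [he]
      exact linearIndependent_empty_type
  · intro r har ih hrn
    obtain ⟨ihInj, ihInd⟩ := ih (by omega)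
    by_cases hm : r + 1 ∈ gset k n A a
    · have hnotin : A (r + 1) ∉ psp k A a r := by
        have := (mem_gset.mp hm).2.2
        have he : r + 1 - 1 = r := by omega
        rwa [he] at this
      have hsp := psp_gspan (n := n) A a r (by omega) (by omega)
      have hfil : ((gset k n A a).filter (fun j => j ≤ r + 1)) =
          insert (r+1) ((gset k n A a).filter (fun j => j ≤ r)) := by
        ext j
        simp only [Finset.mem_filter, Finset.mem_insert]
        constructor
        · rintro ⟨hj, hle⟩
          rcases eq_or_lt_of_le hle with h | h
          · exact Or.inl h
          · exact Or.inr ⟨hj, by omega⟩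
        · rintro (rfl | ⟨hj, hle⟩)
          · exact ⟨hm, le_refl _⟩
          · exact ⟨hj, by omega⟩
      have hnotsp : A (r+1) ∉ Submodule.span ℂ
          (A '' (((gset k n A a).filter (fun j => j ≤ r)) : Set ℤ)) := by
        rw [← hsp]; exact hnotin
      have hnotim : A (r+1) ∉ A '' (((gset k n A a).filter (fun j => j ≤ r)) : Set ℤ) := by
        intro hc
        exact hnotsp (Submodule.subset_span hc)
      constructor
      · rw [hfil, Finset.coe_insert]
        intro x hx y hy hxy
        rcases hx with rfl | hx
        · rcases hy with rfl | hy
          · rfl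
          · exact absurd (hxy ▸ Set.mem_image_of_mem A hy) hnotim
        · rcases hy with rfl | hy
          · exact absurd (hxy.symm ▸ Set.mem_image_of_mem A hx) hnotim
          · exact ihInj hx hy hxy
      · rw [hfil, Finset.coe_insert, Set.image_insert_eq]
        exact LinearIndepOn.id_insert ihInd hnotsp
    · have hfil : ((gset k n A a).filter (fun j => j ≤ r + 1)) =
          ((gset k n A a).filter (fun j => j ≤ r)) := by
        ext j
        simp only [Finset.mem_filter]
        constructor
        · rintro ⟨hj, hle⟩
          refine ⟨hj, ?_⟩
          rcases eq_or_lt_of_le hle with h | h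
          · exact absurd (h ▸ hj) hm
          · omega
        · rintro ⟨hj, hle⟩; exact ⟨hj, by omega⟩
      rw [hfil]
      exact ⟨ihInj, ihInd⟩

lemma gset_filter_all {k n : ℕ} (A : ℤ → Fin k → ℂ) (a : ℤ) :
    (gset k n A a).filter (fun j => j ≤ a + (n:ℤ) - 1) = gset k n A a := by
  apply Finset.filter_true_of_mem
  intro j hj; have := mem_gset.mp hj; omega

lemma gset_injOn {k n : ℕ} (A : ℤ → Fin k → ℂ) (a : ℤ) :
    Set.InjOn A ((gset k n A a : Set ℤ)) := by
  have := (gset_indep_aux (k := k) (n := n) A a (a + (n:ℤ) - 1) (by omega) (le_refl _)).1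
  rwa [gset_filter_all] at this

lemma gset_indep_set {k n : ℕ} (A : ℤ → Fin k → ℂ) (a : ℤ) :
    LinearIndependent ℂ (fun x : (A '' ((gset k n A a : Set ℤ))) => (x : Fin k → ℂ)) := by
  have := (gset_indep_aux (k := k) (n := n) A a (a + (n:ℤ) - 1) (by omega) (le_refl _)).2
  rwa [gset_filter_all] at this

lemma gset_indep {k n : ℕ} (A : ℤ → Fin k → ℂ) (a : ℤ) :
    LinearIndependent ℂ (fun j : ((gset k n A a : Set ℤ)) => A (j : ℤ)) :=
  (linearIndepOn_iff_image (gset_injOn A a)).mpr (gset_indep_set A a)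

lemma gset_span {k n : ℕ} {A : ℤ → Fin k → ℂ} (hper : ColPeriodic k n A)
    (hrank : FullRank k A) (hn : 0 < n) (a : ℤ) :
    Submodule.span ℂ (A '' ((gset k n A a : Set ℤ))) = ⊤ := by
  have h := psp_gspan (n := n) A a (a + (n:ℤ) - 1) (by omega) (le_refl _)
  rw [gset_filter_all] at h
  rw [← h]
  exact psp_top hper hrank hn a

lemma gset_card {k n : ℕ} {A : ℤ → Fin k → ℂ} (hper : ColPeriodic k n A)
    (hrank : FullRank k A) (hn : 0 < n) (a : ℤ) :
    (gset k n A a).card = k := by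
  classical
  have hb : Module.Basis ((gset k n A a : Set ℤ)) ℂ (Fin k → ℂ) :=
    Module.Basis.mk (gset_indep A a) (by
      rw [← gset_span hper hrank hn a]
      apply Submodule.span_mono
      rintro x ⟨j, hj, rfl⟩
      exact ⟨⟨j, hj⟩, rfl⟩)
  have h1 := Module.finrank_eq_card_basis hb
  rw [Module.finrank_pi] at h1
  simp only [Fintype.card_fin] at h1
  have h2 : Fintype.card ((gset k n A a : Set ℤ)) = (gset k n A a).card :=
    Fintype.card_coe _
  omega

lemma gset_colBasis {k n : ℕ} {A : ℤ → Fin k → ℂ} (hper : ColPeriodic k n A)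
    (hrank : FullRank k A) (hn : 0 < n) (a : ℤ) :
    IsColBasis k A (gset k n A a) :=
  ⟨gset_card hper hrank hn a, gset_indep A a, gset_span hper hrank hn a⟩

lemma gale_counting {k n : ℕ} {A : ℤ → Fin k → ℂ} (hper : ColPeriodic k n A)
    (hrank : FullRank k A) (hn : 0 < n) (a : ℤ) (J : Finset ℤ)
    (hJsub : J ⊆ Finset.Ico a (a + (n : ℤ))) (hJ : IsColBasis k A J) :
    galeLE (gset k n A a) J := by
  classical
  obtain ⟨hJcard, hJind, hJspan⟩ := hJ
  constructor
  · rw [gset_card hper hrank hn a, hJcard]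
  intro s
  -- reduce to the "below" counting
  have key : ∀ s : ℤ, a < s → s ≤ a + (n:ℤ) →
      (J.filter (fun x => x < s)).card ≤ ((gset k n A a).filter (fun x => x < s)).card := by
    intro s hs1 hs2
    set r : ℤ := s - 1 with hr
    set G : Finset ℤ := (gset k n A a).filter (fun j => j ≤ r) with hG
    have hGfil : (gset k n A a).filter (fun x => x < s) = G := by
      apply Finset.filter_congr
      intro x _; simp only [hr]; constructor <;> intro h <;> omega
    have hsp := psp_gspan (n := n) A a r (by omega) (by omega)
    set S : Finset ℤ := J.filter (fun x => x < s) with hS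
    -- the family over S is linearly independent with values in psp a r
    have hSsubJ : (S : Set ℤ) ⊆ (J : Set ℤ) := by
      intro x hx
      simp only [hS, Finset.coe_filter, Set.mem_setOf_eq] at hx
      exact hx.1
    have hSind : LinearIndependent ℂ (fun j : (S : Set ℤ) => A (j : ℤ)) := by
      have := hJind.comp (Set.inclusion hSsubJ) (Set.inclusion_injective hSsubJ)
      exact this
    have hmemN : ∀ j : ℤ, j ∈ (S : Set ℤ) → A j ∈ psp k A a r := by
      intro j hj
      simp only [hS, Finset.coe_filter, Set.mem_setOf_eq] at hj
      obtain ⟨hj1, hj3⟩ := hj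
      have hj2 := hJsub hj1
      rw [Finset.mem_Ico] at hj2
      exact mem_psp_self A hj2.1 (by omega)
    -- independent family inside the span ⇒ card bound by finrank
    have hcard1 : S.card ≤ Module.finrank ℂ (psp k A a r) := by
      have hres : LinearIndependent ℂ
          (fun j : (S : Set ℤ) => (⟨A (j : ℤ), hmemN j j.2⟩ : psp k A a r)) := by
        apply LinearIndependent.of_comp (psp k A a r).subtype
        exact hSind
      have hfc := hres.fintype_card_le_finrank
      have : Fintype.card ((S : Set ℤ)) = S.card := by
        simp [Finset.coe_sort_coe]
      omega
    have hcard2 : Module.finrank ℂ (psp k A a r) ≤ G.card := by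
      rw [hsp, ← hG]
      have : (A '' (G : Set ℤ)) = ((G.image A : Finset (Fin k → ℂ)) : Set (Fin k → ℂ)) := by
        rw [Finset.coe_image]
      rw [this]
      have h3 := finrank_span_le_card (R := ℂ) ((G.image A : Finset (Fin k → ℂ)) : Set (Fin k → ℂ))
      rw [Finset.toFinset_coe] at h3
      exact le_trans h3 (Finset.card_image_le)
    rw [hGfil]
    omega
  -- now convert upper counting to lower counting
  have hcompl : ∀ (B : Finset ℤ), (B.filter (fun x => s ≤ x)).card + (B.filter (fun x => x < s)).card = B.card := by
    intro B
    have h := Finset.card_filter_add_card_filter_not (s := B) (p := fun x => s ≤ x)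
    have hneg : B.filter (fun x => ¬ s ≤ x) = B.filter (fun x => x < s) := by
      apply Finset.filter_congr
      intro x _
      simp [not_le]
    rw [hneg] at h
    exact h
  by_cases hs1 : a < s
  · by_cases hs2 : s ≤ a + (n : ℤ)
    · have hk := key s hs1 hs2
      have e1 := hcompl (gset k n A a)
      have e2 := hcompl J
      rw [gset_card hper hrank hn a] at e1
      rw [hJcard] at e2
      omega
    · -- s > a + n : both filters ≥ s are empty
      have h1 : (gset k n A a).filter (fun x => s ≤ x) = ∅ := by
        apply Finset.filter_false_of_mem
        intro j hj; have := mem_gset.mp hj; omega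
      have h2 : (J.filter (fun x => s ≤ x)).card ≥ 0 := Nat.zero_le _
      rw [h1]; simp
  · -- s ≤ a : both filters are everything
    have h1 : (gset k n A a).filter (fun x => s ≤ x) = gset k n A a := by
      apply Finset.filter_true_of_mem
      intro j hj; have := mem_gset.mp hj; omega
    have h2 : J.filter (fun x => s ≤ x) = J := by
      apply Finset.filter_true_of_mem
      intro j hj; have := Finset.mem_Ico.mp (hJsub hj); omega
    rw [h1, h2, gset_card hper hrank hn a, hJcard]

lemma gset_minBasis {k n : ℕ} {A : ℤ → Fin k → ℂ} (hper : ColPeriodic k n A)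
    (hrank : FullRank k A) (hn : 0 < n) (a : ℤ) :
    IsMinBasis k n A a (gset k n A a) :=
  ⟨gset_subset A a, gset_colBasis hper hrank hn a,
    fun J hJs hJb => gale_counting hper hrank hn a J hJs hJb⟩

lemma psp_shift {k n : ℕ} {A : ℤ → Fin k → ℂ} (hper : ColPeriodic k n A) (a r : ℤ) :
    psp k A (a + (n:ℤ)) (r + (n:ℤ)) = psp k A a r := by
  have himg : A '' Set.Icc (a + (n:ℤ)) (r + (n:ℤ)) = A '' Set.Icc a r := by
    ext v
    constructor
    · rintro ⟨x, hx, rfl⟩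
      rw [Set.mem_Icc] at hx
      refine ⟨x - n, ⟨by omega, by omega⟩, ?_⟩
      have : A (x - n + n) = A (x - n) := hper (x - n)
      have hxx : x - (n:ℤ) + n = x := by omega
      rw [hxx] at this
      exact this.symm
    · rintro ⟨x, hx, rfl⟩
      rw [Set.mem_Icc] at hx
      refine ⟨x + n, ⟨by omega, by omega⟩, hper x⟩
  simp only [psp_def, himg]

lemma gset_shift {k n : ℕ} {A : ℤ → Fin k → ℂ} (hper : ColPeriodic k n A) (a : ℤ) :
    gset k n A (a + (n:ℤ)) = (gset k n A a).image (fun j => j + (n:ℤ)) := by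
  ext j
  simp only [Finset.mem_image]
  rw [mem_gset]
  constructor
  · rintro ⟨h1, h2, h3⟩
    refine ⟨j - n, mem_gset.mpr ⟨by omega, by omega, ?_⟩, by omega⟩
    intro hc
    apply h3
    have := psp_shift hper a (j - n - 1)
    have he : j - (n:ℤ) - 1 + n = j - 1 := by omega
    rw [he] at this
    rw [this]
    have hA : A (j - n + n) = A (j - n) := hper (j - n)
    have he2 : j - (n:ℤ) + n = j := by omega
    rw [he2] at hA
    rwa [hA]
  · rintro ⟨x, hx, rfl⟩
    obtain ⟨h1, h2, h3⟩ := mem_gset.mp hx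
    refine ⟨by omega, by omega, ?_⟩
    intro hc
    apply h3
    have := psp_shift hper a (x - 1)
    have he : x - 1 + (n:ℤ) = x + n - 1 := by omega
    rw [he] at this
    rw [← this]
    rwa [hper x] at hc

lemma pi_shift {k n : ℕ} {A : ℤ → Fin k → ℂ} (hper : ColPeriodic k n A)
    {π : ℤ → ℤ} (hπ : IsBAP k n A π) (a : ℤ) :
    π (a + (n:ℤ)) = π a + (n:ℤ) := by
  obtain ⟨h1, h2, h3, h4⟩ := hπ a
  obtain ⟨g1, g2, g3, g4⟩ := hπ (a + (n:ℤ))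
  have hIoc : ∀ u v : ℤ, A '' Set.Ioc (u + (n:ℤ)) (v + (n:ℤ)) = A '' Set.Ioc u v := by
    intro u v
    ext w
    constructor
    · rintro ⟨x, hx, rfl⟩
      rw [Set.mem_Ioc] at hx
      refine ⟨x - n, ⟨by omega, by omega⟩, ?_⟩
      have hA := hper (x - n)
      have he : x - (n:ℤ) + n = x := by omega
      rw [he] at hA
      exact hA.symm
    · rintro ⟨x, hx, rfl⟩
      rw [Set.mem_Ioc] at hx
      exact ⟨x + n, ⟨by omega, by omega⟩, hper x⟩
  have hle1 : π (a + (n:ℤ)) ≤ π a + n := by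
    apply g4 _ (by omega) (by omega)
    have : A '' Set.Ioc (a + (n:ℤ)) (π a + n) = A '' Set.Ioc a (π a) := hIoc a (π a)
    rw [this, hper a]
    exact h3
  have hle2 : π a ≤ π (a + (n:ℤ)) - n := by
    apply h4 _ (by omega) (by omega)
    have he : π (a + (n:ℤ)) - (n:ℤ) + n = π (a + (n:ℤ)) := by omega
    have : A '' Set.Ioc a (π (a + (n:ℤ)) - n) = A '' Set.Ioc (a + (n:ℤ)) (π (a + (n:ℤ))) := by
      rw [← hIoc a _, he]
    rw [this, ← hper a]
    exact g3
  omega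

lemma twist_eq {k n : ℕ} {A T : ℤ → Fin k → ℂ} (hper : ColPeriodic k n A)
    (hrank : FullRank k A) (hn : 0 < n) (hT : IsRightTwist k n A T) (a : ℤ)
    {v : Fin k → ℂ}
    (hv : ∀ j ∈ gset k n A a, bil k v (A j) = if j = a then 1 else 0) :
    v = T a := by
  apply dual_unique (gset_span hper hrank hn a) (f := fun j => if j = a then 1 else 0) hv
  intro j hj
  exact hT a (gset k n A a) (gset_minBasis hper hrank hn a) j hj

lemma twist_shift {k n : ℕ} {A T : ℤ → Fin k → ℂ} (hper : ColPeriodic k n A)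
    (hrank : FullRank k A) (hn : 0 < n) (hT : IsRightTwist k n A T) (a : ℤ) :
    T (a + (n:ℤ)) = T a := by
  apply twist_eq hper hrank hn hT a
  intro j hj
  have hj' : j + (n:ℤ) ∈ gset k n A (a + (n:ℤ)) := by
    rw [gset_shift hper a]
    exact Finset.mem_image_of_mem _ hj
  have := hT (a + (n:ℤ)) _ (gset_minBasis hper hrank hn (a + (n:ℤ))) (j + n) hj'
  rw [hper j] at this
  rw [this]
  by_cases h : j = a
  · simp [h]
  · rw [if_neg h, if_neg (by omega)]

lemma psp_mono_lower {k : ℕ} (A : ℤ → Fin k → ℂ) {a a' r : ℤ} (h : a ≤ a') :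
    psp k A a' r ≤ psp k A a r :=
  Submodule.span_mono (Set.image_mono (Set.Icc_subset_Icc_left h))

lemma Ioc_eq_Icc_succ (u v : ℤ) : Set.Ioc u v = Set.Icc (u+1) v := by
  ext x; simp [Set.mem_Ioc, Set.mem_Icc]

lemma span_Ioc_psp {k : ℕ} (A : ℤ → Fin k → ℂ) (u v : ℤ) :
    Submodule.span ℂ (A '' Set.Ioc u v) = psp k A (u+1) v := by
  rw [psp_def, Ioc_eq_Icc_succ]

lemma psp_insert_bot {k : ℕ} (A : ℤ → Fin k → ℂ) {a r : ℤ} (h : a ≤ r) :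
    psp k A a r = Submodule.span ℂ {A a} ⊔ psp k A (a+1) r := by
  have : Set.Icc a r = insert a (Set.Icc (a+1) r) := by
    ext x; simp [Set.mem_Icc]; omega
  rw [psp_def, this, Set.image_insert_eq, Submodule.span_insert, psp_def]

lemma pi_eq_self_of_zero {k n : ℕ} {A : ℤ → Fin k → ℂ} {π : ℤ → ℤ}
    (hπ : IsBAP k n A π) {a : ℤ} (ha : A a = 0) : π a = a := by
  obtain ⟨h1, h2, h3, h4⟩ := hπ a
  have := h4 a (le_refl a) (by omega) (by
    simp [Set.Ioc_self, ha])
  omega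

lemma pi_gt_of_ne {k n : ℕ} {A : ℤ → Fin k → ℂ} {π : ℤ → ℤ}
    (hπ : IsBAP k n A π) {a : ℤ} (ha : A a ≠ 0) : a < π a := by
  obtain ⟨h1, h2, h3, h4⟩ := hπ a
  rcases eq_or_lt_of_le h1 with h | h
  · exfalso
    apply ha
    have h3' := h3
    rw [← h] at h3'
    simpa [Set.Ioc_self] using h3'
  · exact h

lemma pi_min {k n : ℕ} {A : ℤ → Fin k → ℂ} {π : ℤ → ℤ}
    (hπ : IsBAP k n A π) {a r : ℤ} (h1 : a ≤ r) (h2 : r ≤ a + (n:ℤ)) (h3 : r < π a) :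
    A a ∉ psp k A (a+1) r := by
  intro hc
  rw [← span_Ioc_psp] at hc
  exact absurd ((hπ a).2.2.2 r h1 h2 hc) (by omega)

lemma pi_mem {k n : ℕ} {A : ℤ → Fin k → ℂ} {π : ℤ → ℤ}
    (hπ : IsBAP k n A π) (a : ℤ) :
    A a ∈ psp k A (a+1) (π a) := by
  rw [← span_Ioc_psp]
  exact (hπ a).2.2.1

lemma necklace_zero {k n : ℕ} {A : ℤ → Fin k → ℂ} (hper : ColPeriodic k n A)
    {a : ℤ} (ha : A a = 0) :
    gset k n A (a+1) = gset k n A a := by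
  have hpsp : ∀ r : ℤ, a ≤ r → psp k A a r = psp k A (a+1) r := by
    intro r hr
    rw [psp_insert_bot A hr, ha]
    simp
  ext j
  rw [mem_gset, mem_gset]
  constructor
  · rintro ⟨h1, h2, h3⟩
    rcases eq_or_lt_of_le (show j + 1 ≤ a + 1 + (n:ℤ) from h2) with h | h
    · exfalso
      apply h3
      have : A j = A a := by
        have he : j = a + (n:ℤ) := by omega
        rw [he, hper a]
      rw [this, ha]
      exact Submodule.zero_mem _
    · exact ⟨by omega, by omega, by rw [hpsp (j-1) (by omega)]; exact h3⟩
  · rintro ⟨h1, h2, h3⟩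
    rcases eq_or_lt_of_le h1 with h | h
    · exfalso
      apply h3
      rw [← h, ha]
      exact Submodule.zero_mem _
    · refine ⟨by omega, by omega, ?_⟩
      rw [← hpsp (j-1) (by omega)]
      exact h3

lemma necklace {k n : ℕ} {A : ℤ → Fin k → ℂ} (hper : ColPeriodic k n A)
    {π : ℤ → ℤ} (hπ : IsBAP k n A π) {a : ℤ} (ha : A a ≠ 0) :
    gset k n A (a+1) = insert (π a) ((gset k n A a).erase a) := by
  obtain ⟨hp1, hp2, _, _⟩ := hπ a
  have hgt : a < π a := pi_gt_of_ne hπ ha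
  have hnotin : ∀ r, a ≤ r → r < π a → A a ∉ psp k A (a+1) r := by
    intro r h1 h2
    exact pi_min hπ h1 (by omega) h2
  have hin : A a ∈ psp k A (a+1) (π a) := pi_mem hπ a
  -- span equality above π a
  have hspabove : ∀ r, π a ≤ r → psp k A a r = psp k A (a+1) r := by
    intro r hr
    rw [psp_insert_bot A (by omega)]
    rw [sup_eq_right.mpr]
    rw [Submodule.span_singleton_le_iff_mem]
    exact psp_mono A (a+1) hr hin
  -- membership transfer below π a
  have hmeq : ∀ j, a + 1 ≤ j → j ≤ π a - 1 →
      (A j ∈ psp k A (a+1) (j-1) ↔ A j ∈ psp k A a (j-1)) := by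
    intro j h1 h2
    constructor
    · intro h
      exact psp_mono_lower A (by omega) h
    · intro h
      rw [psp_insert_bot A (by omega)] at h
      rw [Submodule.mem_sup] at h
      obtain ⟨y, hy, z, hz, hyz⟩ := h
      rw [Submodule.mem_span_singleton] at hy
      obtain ⟨c, rfl⟩ := hy
      by_cases hc : c = 0
      · rw [hc] at hyz
        simp at hyz
        rwa [← hyz]
      · exfalso
        apply hnotin j (by omega) (by omega)
        have hAj : A j ∈ psp k A (a+1) j := mem_psp_self A (by omega) (le_refl j)
        have hz' : z ∈ psp k A (a+1) j := psp_mono A (a+1) (by omega) hz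
        have : A a = c⁻¹ • (A j - z) := by
          rw [← hyz, add_sub_cancel_right, smul_smul, inv_mul_cancel₀ hc, one_smul]
        rw [this]
        exact Submodule.smul_mem _ _ (Submodule.sub_mem _ hAj hz')
  have hmema : a ∈ gset k n A a := by
    rw [mem_gset]
    refine ⟨le_refl a, by omega, ?_⟩
    rw [psp_bot A (by omega)]
    simpa using ha
  have hpia_mem : π a ∈ gset k n A (a+1) := by
    rw [mem_gset]
    refine ⟨by omega, by omega, ?_⟩
    intro hc
    apply hnotin (π a - 1) (by omega) (by omega)
    have he : π a - 1 + 1 = π a := by omega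
    have h2 := psp_succ A (a := a+1) (r := π a - 1) (by omega)
    rw [he] at h2
    have hcol : psp k A (a+1) (π a) = psp k A (a+1) (π a - 1) := by
      rw [h2, Submodule.span_insert, psp_def, sup_eq_right.mpr]
      rwa [Submodule.span_singleton_le_iff_mem]
    rw [← hcol]
    exact hin
  have hpia_notg : A (π a) ∈ psp k A a (π a - 1) := by
    have he : π a - 1 + 1 = π a := by omega
    have h2 := psp_succ A (a := a+1) (r := π a - 1) (by omega)
    rw [he] at h2
    have hin' := hin
    rw [h2, Submodule.span_insert, Submodule.mem_sup] at hin'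
    obtain ⟨y, hy, z, hz, hyz⟩ := hin'
    rw [Submodule.mem_span_singleton] at hy
    obtain ⟨c, rfl⟩ := hy
    by_cases hc : c = 0
    · exfalso
      apply hnotin (π a - 1) (by omega) (by omega)
      rw [hc] at hyz
      simp at hyz
      rw [← hyz]
      exact hz
    · have : A (π a) = c⁻¹ • (A a - z) := by
        rw [← hyz, add_sub_cancel_right, smul_smul, inv_mul_cancel₀ hc, one_smul]
      rw [this]
      have hAa : A a ∈ psp k A a (π a - 1) := mem_psp_self A (le_refl a) (by omega)
      have hz' : z ∈ psp k A a (π a - 1) := psp_mono_lower A (by omega) hz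
      exact Submodule.smul_mem _ _ (Submodule.sub_mem _ hAa hz')
  ext j
  rw [Finset.mem_insert, Finset.mem_erase, mem_gset, mem_gset]
  constructor
  · rintro ⟨h1, h2, h3⟩
    by_cases hj : j = π a
    · exact Or.inl hj
    · refine Or.inr ⟨by omega, by omega, ?_, ?_⟩
      · -- j < a + n
        by_contra hcon
        have hje : j = a + (n:ℤ) := by omega
        apply h3
        have hcolj : A j = A a := by rw [hje, hper a]
        rw [hcolj]
        have hple : π a ≤ j - 1 := by omega
        exact psp_mono A (a+1) hple hin
      · -- A j ∉ psp a (j-1)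
        intro hc
        apply h3
        rcases lt_or_ge j (π a) with hlt | hge
        · exact (hmeq j (by omega) (by omega)).mpr hc
        · have : π a ≤ j - 1 := by omega
          rw [hspabove (j-1) this] at hc
          exact hc
  · rintro (rfl | ⟨hne, h1, h2, h3⟩)
    · exact mem_gset.mp hpia_mem
    · refine ⟨by omega, by omega, ?_⟩
      intro hc
      apply h3
      rcases lt_or_ge j (π a) with hlt | hge
      · exact (hmeq j (by omega) (by omega)).mp hc
      · have hjne : j ≠ π a := by
          intro hcon
          apply absurd hpia_notg
          rw [← hcon]
          exact h3
        have : π a ≤ j - 1 := by omega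
        rw [hspabove (j-1) this]
        exact hc


lemma mem_gset_self {k n : ℕ} {A : ℤ → Fin k → ℂ} (hn : 0 < n) {a : ℤ} (ha : A a ≠ 0) :
    a ∈ gset k n A a := by
  rw [mem_gset]
  refine ⟨le_refl a, by omega, ?_⟩
  rw [psp_bot A (by omega)]
  simpa using ha

lemma bil_vanish_prefix {k n : ℕ} {A : ℤ → Fin k → ℂ} (a r : ℤ)
    (har : a - 1 ≤ r) (hrn : r ≤ a + (n:ℤ) - 1) {v : Fin k → ℂ}
    (hv : ∀ j ∈ gset k n A a, j ≤ r → bil k v (A j) = 0)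
    {x : Fin k → ℂ} (hx : x ∈ psp k A a r) : bil k v x = 0 := by
  rw [psp_gspan (n := n) A a r har hrn] at hx
  refine bil_span_zero ?_ hx
  rintro w ⟨j, hj, rfl⟩
  rw [Finset.coe_filter, Set.mem_setOf_eq] at hj
  exact hv j hj.1 hj.2

lemma pi_mem' {k n : ℕ} {A : ℤ → Fin k → ℂ} {π : ℤ → ℤ}
    (hπ : IsBAP k n A π) (a : ℤ) :
    A (a - 1) ∈ psp k A a (π (a-1)) := by
  have := pi_mem hπ (a-1)
  rwa [show a - 1 + 1 = a by omega] at this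

lemma dualU {k n : ℕ} {A T : ℤ → Fin k → ℂ} (hper : ColPeriodic k n A)
    (hrank : FullRank k A) (hn : 0 < n) {π : ℤ → ℤ} (hπ : IsBAP k n A π)
    (hT : IsRightTwist k n A T) :
    ∀ (N : ℕ) (a m : ℤ), (n:ℤ) - (m - a) ≤ N → a < m → m ∈ gset k n A a →
    ∀ u : Fin k → ℂ, (∀ j ∈ gset k n A a, bil k u (A j) = if j = m then 1 else 0) →
    u ∈ Submodule.span ℂ (T '' {q : ℤ | q < a ∧ m ≤ π q}) := by
  intro N
  induction N with
  | zero =>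
      intro a m hN ham hm u hu
      exfalso
      have := mem_gset.mp hm
      omega
  | succ N ih =>
      intro a m hN ham hm u hu
      have hmw := mem_gset.mp hm
      have hmono : Submodule.span ℂ (T '' {q : ℤ | q < a - 1 ∧ m ≤ π q}) ≤
          Submodule.span ℂ (T '' {q : ℤ | q < a ∧ m ≤ π q}) := by
        apply Submodule.span_mono
        apply Set.image_mono
        intro q hq
        obtain ⟨hq1, hq2⟩ := hq
        exact ⟨by omega, hq2⟩
      by_cases hz : A (a-1) = 0
      · have hg : gset k n A a = gset k n A (a-1) := by
          have h := necklace_zero (k := k) (n := n) (A := A) hper (a := a - 1) hz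
          rwa [show a - 1 + 1 = a by omega] at h
        refine hmono (ih (a-1) m (by omega) (by omega) (hg ▸ hm) u ?_)
        intro j hj
        exact hu j (hg ▸ hj)
      · have hneck : gset k n A a = insert (π (a-1)) ((gset k n A (a-1)).erase (a-1)) := by
          have h := necklace (k := k) (n := n) hper hπ (a := a - 1) hz
          rwa [show a - 1 + 1 = a by omega] at h
        have herase_sub : (gset k n A (a-1)).erase (a-1) ⊆ gset k n A a := by
          rw [hneck]; exact Finset.subset_insert _ _
        have hTd : ∀ j ∈ gset k n A (a-1), bil k (T (a-1)) (A j) = if j = a-1 then 1 else 0 :=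
          fun j hj => hT (a-1) _ (gset_minBasis hper hrank hn (a-1)) j hj
        have hTd1 : bil k (T (a-1)) (A (a-1)) = 1 := by
          have := hTd (a-1) (mem_gset_self hn hz)
          simpa using this
        by_cases hpm : π (a-1) = m
        · -- u is a multiple of T (a-1)
          set s := bil k (T (a-1)) (A m) with hs_def
          have hTzero : ∀ j ∈ gset k n A a, j ≠ m → bil k (T (a-1)) (A j) = 0 := by
            intro j hj hjm
            have hj' : j ∈ (gset k n A (a-1)).erase (a-1) := by
              rw [hneck] at hj
              rcases Finset.mem_insert.mp hj with h | h
              · exact absurd (h.trans hpm) hjm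
              · exact h
            have hjne : j ≠ a - 1 := (Finset.mem_erase.mp hj').1
            rw [hTd j (Finset.mem_erase.mp hj').2, if_neg hjne]
          have hs : s ≠ 0 := by
            intro hs0
            have hkill : ∀ j ∈ gset k n A a, j ≤ m → bil k (T (a-1)) (A j) = 0 := by
              intro j hj _
              by_cases hjm : j = m
              · rw [hjm, ← hs_def]; exact hs0
              · exact hTzero j hj hjm
            have hmem := pi_mem' hπ a
            rw [hpm] at hmem
            have h0 := bil_vanish_prefix (n := n) a m (by omega) (by omega) hkill hmem
            rw [hTd1] at h0
            exact one_ne_zero h0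
          have huT : u = s⁻¹ • T (a-1) := by
            refine dual_unique (gset_span hper hrank hn a)
              (f := fun j => if j = m then (1:ℂ) else 0) hu ?_
            intro j hj
            show bil k (s⁻¹ • T (a-1)) (A j) = if j = m then 1 else 0
            rw [bil_smul]
            by_cases hjm : j = m
            · rw [hjm, ← hs_def, inv_mul_cancel₀ hs]
              simp
            · rw [hTzero j hj hjm, mul_zero, if_neg hjm]
          rw [huT]
          refine Submodule.smul_mem _ _ (Submodule.subset_span ?_)
          exact ⟨a-1, ⟨by omega, by rw [hpm]⟩, rfl⟩
        · have hm' : m ∈ gset k n A (a-1) := by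
            rw [hneck] at hm
            rcases Finset.mem_insert.mp hm with h | h
            · exact absurd h.symm hpm
            · exact (Finset.mem_erase.mp h).2
          set c := bil k u (A (a-1)) with hc_def
          have hu' : ∀ j ∈ gset k n A (a-1),
              bil k (u - c • T (a-1)) (A j) = if j = m then 1 else 0 := by
            intro j hj
            rw [bil_sub, bil_smul]
            by_cases hja : j = a-1
            · rw [hja, hTd1, mul_one, if_neg (show ¬(a-1 = m) by omega), ← hc_def, sub_self]
            · have hje : j ∈ (gset k n A (a-1)).erase (a-1) := Finset.mem_erase.mpr ⟨hja, hj⟩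
              rw [hTd j hj, if_neg hja, mul_zero, sub_zero]
              exact hu j (herase_sub hje)
          have hrec := ih (a-1) m (by omega) (by omega) hm' _ hu'
          have hcpi : c ≠ 0 → m ≤ π (a-1) := by
            intro hc0
            by_contra hcon
            push_neg at hcon
            apply hc0
            have hkill : ∀ j ∈ gset k n A a, j ≤ π (a-1) → bil k u (A j) = 0 := by
              intro j hj hjle
              rw [hu j hj, if_neg (by omega)]
            have hpia1 : a - 1 < π (a-1) := pi_gt_of_ne hπ hz
            have hpia2 : π (a-1) ≤ a - 1 + n := (hπ (a-1)).2.1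
            exact bil_vanish_prefix (n := n) a (π (a-1)) (by omega) (by omega) hkill
              (pi_mem' hπ a)
          have hsum : u = (u - c • T (a-1)) + c • T (a-1) := (sub_add_cancel _ _).symm
          rw [hsum]
          apply Submodule.add_mem
          · exact hmono hrec
          · by_cases hc0 : c = 0
            · rw [hc0, zero_smul]; exact Submodule.zero_mem _
            · exact Submodule.smul_mem _ _
                (Submodule.subset_span ⟨a-1, ⟨by omega, hcpi hc0⟩, rfl⟩)

lemma bil_add_right {k : ℕ} (v x y : Fin k → ℂ) :
    bil k v (x + y) = bil k v x + bil k v y := by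
  simp [bil, mul_add, Finset.sum_add_distrib]

lemma bil_smul_right {k : ℕ} (c : ℂ) (v x : Fin k → ℂ) :
    bil k v (c • x) = c * bil k v x := by
  simp [bil, Finset.mul_sum]
  congr 1; funext i; ring

lemma span_exchange {k : ℕ} {x y : Fin k → ℂ} {s : Set (Fin k → ℂ)}
    (hx : x ∈ Submodule.span ℂ (insert y s)) (hxs : x ∉ Submodule.span ℂ s) :
    y ∈ Submodule.span ℂ (insert x s) := by
  rw [Submodule.mem_span_insert] at hx
  obtain ⟨c, z, hz, rfl⟩ := hx
  by_cases hc : c = 0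
  · exfalso; apply hxs; rw [hc, zero_smul, zero_add]; exact hz
  · have hxmem : (c • y + z) ∈ Submodule.span ℂ (insert (c • y + z) s) :=
      Submodule.subset_span (Set.mem_insert _ _)
    have hz' : z ∈ Submodule.span ℂ (insert (c • y + z) s) :=
      Submodule.span_mono (Set.subset_insert _ _) hz
    have hy : y = c⁻¹ • (c • y + z - z) := by
      rw [add_sub_cancel_right, smul_smul, inv_mul_cancel₀ hc, one_smul]
    have hres := Submodule.smul_mem (Submodule.span ℂ (insert (c • y + z) s)) c⁻¹
      (Submodule.sub_mem _ hxmem hz')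
    rwa [← hy] at hres

lemma psp_congr_cols {k : ℕ} {A B : ℤ → Fin k → ℂ} {a r : ℤ}
    (h : ∀ j, a ≤ j → j ≤ r → B j = A j) : psp k B a r = psp k A a r := by
  simp only [psp_def]
  congr 1
  ext v
  constructor
  · rintro ⟨j, hj, rfl⟩
    rw [Set.mem_Icc] at hj
    exact ⟨j, Set.mem_Icc.mpr hj, (h j hj.1 hj.2).symm⟩
  · rintro ⟨j, hj, rfl⟩
    rw [Set.mem_Icc] at hj
    exact ⟨j, Set.mem_Icc.mpr hj, h j hj.1 hj.2⟩

lemma psp_le_of_forall {k : ℕ} {B A : ℤ → Fin k → ℂ} {a r : ℤ}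
    (h : ∀ j, a ≤ j → j ≤ r → B j ∈ psp k A a r) : psp k B a r ≤ psp k A a r := by
  rw [psp_def, Submodule.span_le]
  rintro v ⟨j, hj, rfl⟩
  rw [Set.mem_Icc] at hj
  exact h j hj.1 hj.2

lemma psp_antisymm_cols {k : ℕ} {B A : ℤ → Fin k → ℂ} {a r : ℤ}
    (h1 : ∀ j, a ≤ j → j ≤ r → B j ∈ psp k A a r)
    (h2 : ∀ j, a ≤ j → j ≤ r → A j ∈ psp k B a r) : psp k B a r = psp k A a r :=
  le_antisymm (psp_le_of_forall h1) (psp_le_of_forall h2)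

lemma psp_absorb {k : ℕ} {A : ℤ → Fin k → ℂ} {a r : ℤ} (h : a - 1 ≤ r)
    (hmem : A (r+1) ∈ psp k A a r) : psp k A a (r+1) = psp k A a r := by
  rw [psp_succ A h, Submodule.span_insert, psp_def, sup_eq_right.mpr]
  rwa [Submodule.span_singleton_le_iff_mem]

lemma caseEQ {k n : ℕ} {A Ahat T That : ℤ → Fin k → ℂ}
    (hper : ColPeriodic k n A) (hrank : FullRank k A) (hn : 0 < n)
    (hhatper : ColPeriodic k n Ahat) (hhatrank : FullRank k Ahat)
    (hT : IsRightTwist k n A T) (hThat : IsRightTwist k n Ahat That)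
    {a b : ℤ} {t : ℂ}
    (hab : a ≤ b) (hba : b < a + (n:ℤ))
    (hcols : ∀ j, a ≤ j → j < a + (n:ℤ) → j ≠ b → Ahat j = A j)
    (hhatb : Ahat b = A b + t • A (b+1))
    (hbW : A b ∈ psp k A a (b-1)) (hb1W : A (b+1) ∈ psp k A a (b-1)) :
    That a = T a := by
  have hlow : ∀ r, r ≤ b - 1 → psp k Ahat a r = psp k A a r := by
    intro r hr
    exact psp_congr_cols (fun j hj1 hj2 => hcols j hj1 (by omega) (by omega))
  have hWeq : ∀ r, a - 1 ≤ r → r ≤ a + (n:ℤ) - 1 → psp k Ahat a r = psp k A a r := by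
    intro r h1 h2
    rcases lt_or_ge r b with hrb | hrb
    · exact hlow r (by omega)
    · apply psp_antisymm_cols
      · intro j hj1 hj2
        by_cases hjb : j = b
        · rw [hjb, hhatb]
          apply Submodule.add_mem
          · exact mem_psp_self A hab (by omega)
          · exact Submodule.smul_mem _ _ ((psp_mono A a (by omega)) hb1W)
        · rw [hcols j hj1 (by omega) hjb]
          exact mem_psp_self A hj1 hj2
      · intro j hj1 hj2
        by_cases hjb : j = b
        · rw [hjb]
          have : A b ∈ psp k Ahat a (b-1) := by rw [hlow (b-1) (le_refl _)]; exact hbW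
          exact (psp_mono Ahat a (by omega)) this
        · rw [← hcols j hj1 (by omega) hjb]
          exact mem_psp_self Ahat hj1 hj2
  have hbnotg : b ∉ gset k n A a := by
    rw [mem_gset]
    push_neg
    intro _ _
    exact hbW
  have hgeq : gset k n Ahat a = gset k n A a := by
    ext j
    rw [mem_gset, mem_gset]
    constructor
    · rintro ⟨h1, h2, h3⟩
      refine ⟨h1, h2, ?_⟩
      intro hc
      apply h3
      by_cases hjb : j = b
      · rw [hjb, hhatb, hlow (b-1) (le_refl _)]
        exact Submodule.add_mem _ hbW (Submodule.smul_mem _ _ hb1W)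
      · rw [hcols j h1 h2 hjb, hWeq (j-1) (by omega) (by omega)]
        exact hc
    · rintro ⟨h1, h2, h3⟩
      refine ⟨h1, h2, ?_⟩
      intro hc
      apply h3
      by_cases hjb : j = b
      · rw [hjb]; exact hbW
      · rw [← hcols j h1 h2 hjb, ← hWeq (j-1) (by omega) (by omega)]
        exact hc
  apply twist_eq hper hrank hn hT a
  intro j hj
  have hjb : j ≠ b := fun h => hbnotg (h ▸ hj)
  have hj' : j ∈ gset k n Ahat a := hgeq ▸ hj
  have := hThat a _ (gset_minBasis hhatper hhatrank hn a) j hj'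
  obtain ⟨h1, h2, _⟩ := mem_gset.mp hj
  rwa [hcols j h1 h2 hjb] at this

lemma caseNE1 {k n : ℕ} {A Ahat T That : ℤ → Fin k → ℂ}
    (hper : ColPeriodic k n A) (hrank : FullRank k A) (hn : 0 < n)
    (hhatper : ColPeriodic k n Ahat) (hhatrank : FullRank k Ahat)
    (hT : IsRightTwist k n A T) (hThat : IsRightTwist k n Ahat That)
    {a b : ℤ} {t : ℂ}
    (hab : a ≤ b) (hba : b + 1 ≤ a + (n:ℤ) - 1)
    (hcols : ∀ j, a ≤ j → j < a + (n:ℤ) → j ≠ b → Ahat j = A j)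
    (hhatb : Ahat b = A b + t • A (b+1))
    (hbW : A b ∉ psp k A a (b-1)) (hb1W : A (b+1) ∉ psp k A a b) :
    That a = T a := by
  have hlow : ∀ r, r ≤ b - 1 → psp k Ahat a r = psp k A a r := by
    intro r hr
    exact psp_congr_cols (fun j hj1 hj2 => hcols j hj1 (by omega) (by omega))
  -- Ahat b ∉ W-hat
  have hhatbW : Ahat b ∉ psp k Ahat a (b-1) := by
    rw [hlow (b-1) (le_refl _), hhatb]
    intro hc
    by_cases ht : t = 0
    · rw [ht, zero_smul, add_zero] at hc
      exact hbW hc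
    · apply hb1W
      have h1 : A b + t • A (b+1) ∈ psp k A a b := (psp_mono A a (by omega)) hc
      have h2 : A b ∈ psp k A a b := mem_psp_self A hab (le_refl b)
      have h3 : t • A (b+1) = (A b + t • A (b+1)) - A b := by ring_nf
      have h4 : t • A (b+1) ∈ psp k A a b := by
        rw [h3]; exact Submodule.sub_mem _ h1 h2
      have h5 : A (b+1) = t⁻¹ • (t • A (b+1)) := by
        rw [smul_smul, inv_mul_cancel₀ ht, one_smul]
      rw [h5]
      exact Submodule.smul_mem _ _ h4
  -- psp-hat at b: span of insert (Ahat b) over the common low part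
  have hpspb : psp k Ahat a b = Submodule.span ℂ (insert (Ahat b) (A '' Set.Icc a (b-1))) := by
    have h := psp_succ Ahat (a := a) (r := b - 1) (by omega)
    rw [show b - 1 + 1 = b by omega] at h
    rw [h]
    congr 2
    have := hlow (b-1) (le_refl _)
    -- images are equal as sets
    ext v
    constructor
    · rintro ⟨j, hj, rfl⟩
      rw [Set.mem_Icc] at hj
      exact ⟨j, Set.mem_Icc.mpr hj, (hcols j hj.1 (by omega) (by omega)).symm⟩
    · rintro ⟨j, hj, rfl⟩
      rw [Set.mem_Icc] at hj
      exact ⟨j, Set.mem_Icc.mpr hj, hcols j hj.1 (by omega) (by omega)⟩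
  -- A (b+1) ∉ psp-hat a b
  have hb1hat : A (b+1) ∉ psp k Ahat a b := by
    rw [hpspb]
    intro hc
    rw [Submodule.mem_span_insert] at hc
    obtain ⟨e, z, hz, hzeq⟩ := hc
    rw [hhatb] at hzeq
    have hz' : z ∈ psp k A a (b-1) := hz
    have hexp : (1 - e * t) • A (b+1) = e • A b + z := by
      linear_combination (norm := module) hzeq
    by_cases het : 1 - e * t = 0
    · have he0 : e ≠ 0 := by
        intro h0; rw [h0] at het; simp at het
      rw [het, zero_smul] at hexp
      apply hbW
      have hba' : A b = (-e⁻¹) • z := by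
        have h4 : (e⁻¹ * e) • A b = e⁻¹ • (0 - z) := by
          rw [← smul_smul]
          congr 1
          linear_combination (norm := module) -hexp
        rw [inv_mul_cancel₀ he0, one_smul] at h4
        rw [h4]
        module
      rw [hba']
      exact Submodule.smul_mem _ _ hz'
    · apply hb1W
      have hfin : A (b+1) = (1 - e*t)⁻¹ • (e • A b + z) := by
        rw [← hexp, smul_smul, inv_mul_cancel₀ het, one_smul]
      rw [hfin]
      apply Submodule.smul_mem
      apply Submodule.add_mem
      · exact Submodule.smul_mem _ _ (mem_psp_self A hab (le_refl b))
      · exact (psp_mono A a (by omega)) hz'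
  -- spans agree for r ≥ b+1
  have hhigh : ∀ r, b + 1 ≤ r → r ≤ a + (n:ℤ) - 1 → psp k Ahat a r = psp k A a r := by
    intro r h1 h2
    apply psp_antisymm_cols
    · intro j hj1 hj2
      by_cases hjb : j = b
      · rw [hjb, hhatb]
        exact Submodule.add_mem _ (mem_psp_self A hab (by omega))
          (Submodule.smul_mem _ _ (mem_psp_self A (by omega) (by omega)))
      · rw [hcols j hj1 (by omega) hjb]
        exact mem_psp_self A hj1 hj2
    · intro j hj1 hj2
      by_cases hjb : j = b
      · rw [hjb]
        have h3 : Ahat b ∈ psp k Ahat a r := mem_psp_self Ahat hab (by omega)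
        have h4 : A (b+1) ∈ psp k Ahat a r := by
          rw [← hcols (b+1) (by omega) (by omega) (by omega)]
          exact mem_psp_self Ahat (by omega) (by omega)
        have : A b = Ahat b - t • A (b+1) := by rw [hhatb]; module
        rw [this]
        exact Submodule.sub_mem _ h3 (Submodule.smul_mem _ _ h4)
      · rw [← hcols j hj1 (by omega) hjb]
        exact mem_psp_self Ahat hj1 hj2
  -- gsets are equal
  have hgeq : gset k n Ahat a = gset k n A a := by
    ext j
    rw [mem_gset, mem_gset]
    constructor
    · rintro ⟨h1, h2, h3⟩
      refine ⟨h1, h2, ?_⟩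
      intro hc
      apply h3
      rcases lt_trichotomy j b with hj | hj | hj
      · rw [hcols j h1 h2 (by omega), hlow (j-1) (by omega)]
        exact hc
      · exfalso
        rw [hj] at hc
        exact hbW hc
      · rcases eq_or_lt_of_le (show b + 1 ≤ j by omega) with hj1 | hj1
        · exfalso
          rw [← hj1, show b + 1 - 1 = b by omega] at hc
          exact hb1W hc
        · rw [hcols j h1 h2 (by omega), hhigh (j-1) (by omega) (by omega)]
          exact hc
    · rintro ⟨h1, h2, h3⟩
      refine ⟨h1, h2, ?_⟩
      intro hc
      apply h3
      rcases lt_trichotomy j b with hj | hj | hj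
      · rw [← hcols j h1 h2 (by omega), ← hlow (j-1) (by omega)]
        exact hc
      · exfalso
        rw [hj] at hc
        exact hhatbW hc
      · rcases eq_or_lt_of_le (show b + 1 ≤ j by omega) with hj1 | hj1
        · exfalso
          rw [show j - 1 = b by omega, hcols j h1 h2 (by omega), ← hj1] at hc
          exact hb1hat hc
        · rw [← hcols j h1 h2 (by omega), ← hhigh (j-1) (by omega) (by omega)]
          exact hc
  -- memberships of b and b+1 in gset A a
  have hbmem : b ∈ gset k n A a := mem_gset.mpr ⟨hab, by omega, hbW⟩
  have hb1mem : b + 1 ∈ gset k n A a := by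
    refine mem_gset.mpr ⟨by omega, by omega, ?_⟩
    rw [show b + 1 - 1 = b by omega]
    exact hb1W
  -- the twist equations
  have hsys : ∀ j ∈ gset k n Ahat a, bil k (That a) (Ahat j) = if j = a then 1 else 0 :=
    fun j hj => hThat a _ (gset_minBasis hhatper hhatrank hn a) j hj
  have hb1eq : bil k (That a) (A (b+1)) = 0 := by
    have := hsys (b+1) (hgeq ▸ hb1mem)
    rw [hcols (b+1) (by omega) (by omega) (by omega)] at this
    rw [this, if_neg (by omega)]
  apply twist_eq hper hrank hn hT a
  intro j hj
  have hj' : j ∈ gset k n Ahat a := hgeq ▸ hj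
  obtain ⟨h1, h2, _⟩ := mem_gset.mp hj
  by_cases hjb : j = b
  · have := hsys j hj'
    rw [hjb, hhatb, bil_add_right, bil_smul_right, hb1eq, mul_zero, add_zero] at this
    rw [hjb]
    exact this
  · have := hsys j hj'
    rwa [hcols j h1 h2 hjb] at this

lemma caseMAIN {k n : ℕ} {A Ahat T That : ℤ → Fin k → ℂ}
    (hper : ColPeriodic k n A) (hrank : FullRank k A) (hn : 0 < n)
    (hhatper : ColPeriodic k n Ahat) (hhatrank : FullRank k Ahat)
    {π : ℤ → ℤ} (hπ : IsBAP k n A π)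
    (hT : IsRightTwist k n A T) (hThat : IsRightTwist k n Ahat That)
    {a b : ℤ} {t : ℂ} (ht : t ≠ 0)
    (hab : a ≤ b) (hba : b + 1 ≤ a + (n:ℤ) - 1)
    (hcols : ∀ j, a ≤ j → j < a + (n:ℤ) → j ≠ b → Ahat j = A j)
    (hhatb : Ahat b = A b + t • A (b+1))
    (hbW : A b ∈ psp k A a (b-1)) (hb1W : A (b+1) ∉ psp k A a (b-1)) :
    That a - T a ∈ Submodule.span ℂ (T '' {p : ℤ | p < a ∧ a ≤ π a ∧ π a < π p}) := by
  have hlow : ∀ r, r ≤ b - 1 → psp k Ahat a r = psp k A a r := by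
    intro r hr
    exact psp_congr_cols (fun j hj1 hj2 => hcols j hj1 (by omega) (by omega))
  have hWb : psp k A a b = psp k A a (b-1) := by
    have h := psp_absorb (A := A) (a := a) (r := b - 1) (by omega)
      (by rw [show b - 1 + 1 = b by omega]; exact hbW)
    rwa [show b - 1 + 1 = b by omega] at h
  have hb1psp : A (b+1) ∉ psp k A a b := by rw [hWb]; exact hb1W
  have hbnot : b ∉ gset k n A a := by
    rw [mem_gset]; push_neg; intro _ _; exact hbW
  have hb1mem : b + 1 ∈ gset k n A a := by
    refine mem_gset.mpr ⟨by omega, by omega, ?_⟩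
    rwa [show b + 1 - 1 = b by omega]
  have hhatbW : Ahat b ∉ psp k Ahat a (b-1) := by
    rw [hlow (b-1) (le_refl _), hhatb]
    intro hc
    apply hb1W
    have h1 : t • A (b+1) = (A b + t • A (b+1)) - A b := by module
    have h2 : t • A (b+1) ∈ psp k A a (b-1) := by
      rw [h1]; exact Submodule.sub_mem _ hc hbW
    have h3 : A (b+1) = t⁻¹ • (t • A (b+1)) := by
      rw [smul_smul, inv_mul_cancel₀ ht, one_smul]
    rw [h3]
    exact Submodule.smul_mem _ _ h2
  have hbhatmem : b ∈ gset k n Ahat a := mem_gset.mpr ⟨hab, by omega, hhatbW⟩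
  have hpsphatb : psp k Ahat a b = psp k A a (b+1) := by
    apply le_antisymm
    · rw [psp_def, Submodule.span_le]
      rintro v ⟨j, hj, rfl⟩
      rw [Set.mem_Icc] at hj
      by_cases hjb : j = b
      · rw [hjb, hhatb]
        exact Submodule.add_mem _ (mem_psp_self A hab (by omega))
          (Submodule.smul_mem _ _ (mem_psp_self A (by omega) (by omega)))
      · rw [hcols j hj.1 (by omega) hjb]
        exact mem_psp_self A hj.1 (by omega)
    · rw [psp_def, Submodule.span_le]
      rintro v ⟨j, hj, rfl⟩
      rw [Set.mem_Icc] at hj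
      rcases lt_trichotomy j b with hj' | hj' | hj'
      · rw [← hcols j hj.1 (by omega) (by omega)]
        exact mem_psp_self Ahat hj.1 (by omega)
      · rw [hj']
        have : A b ∈ psp k Ahat a (b-1) := by
          rw [hlow (b-1) (le_refl _)]; exact hbW
        exact (psp_mono Ahat a (by omega)) this
      · have hjb1 : j = b + 1 := by omega
        rw [hjb1]
        have h1 : Ahat b ∈ psp k Ahat a b := mem_psp_self Ahat hab (le_refl _)
        have h2 : A b ∈ psp k Ahat a b := by
          have : A b ∈ psp k Ahat a (b-1) := by
            rw [hlow (b-1) (le_refl _)]; exact hbW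
          exact (psp_mono Ahat a (by omega)) this
        have h3 : A (b+1) = t⁻¹ • (Ahat b - A b) := by
          rw [hhatb]
          rw [show A b + t • A (b+1) - A b = t • A (b+1) by module]
          rw [smul_smul, inv_mul_cancel₀ ht, one_smul]
        rw [h3]
        exact Submodule.smul_mem _ _ (Submodule.sub_mem _ h1 h2)
  have hb1hatnot : b + 1 ∉ gset k n Ahat a := by
    rw [mem_gset]; push_neg; intro _ _
    rw [show b + 1 - 1 = b by omega, hcols (b+1) (by omega) (by omega) (by omega), hpsphatb]
    exact mem_psp_self A (by omega) (le_refl _)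
  have hhigh : ∀ r, b + 1 ≤ r → r ≤ a + (n:ℤ) - 1 → psp k Ahat a r = psp k A a r := by
    intro r h1 h2
    apply psp_antisymm_cols
    · intro j hj1 hj2
      by_cases hjb : j = b
      · rw [hjb, hhatb]
        exact Submodule.add_mem _ (mem_psp_self A hab (by omega))
          (Submodule.smul_mem _ _ (mem_psp_self A (by omega) (by omega)))
      · rw [hcols j hj1 (by omega) hjb]
        exact mem_psp_self A hj1 hj2
    · intro j hj1 hj2
      by_cases hjb : j = b
      · rw [hjb]
        have : A b ∈ psp k Ahat a (b-1) := by
          rw [hlow (b-1) (le_refl _)]; exact hbW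
        exact (psp_mono Ahat a (by omega)) this
      · rw [← hcols j hj1 (by omega) hjb]
        exact mem_psp_self Ahat hj1 hj2
  have hgseq : gset k n Ahat a = insert b ((gset k n A a).erase (b+1)) := by
    ext j
    rw [Finset.mem_insert, Finset.mem_erase, mem_gset, mem_gset]
    constructor
    · rintro ⟨h1, h2, h3⟩
      rcases lt_trichotomy j b with hj' | hj' | hj'
      · refine Or.inr ⟨by omega, h1, h2, ?_⟩
        intro hc
        apply h3
        rw [hcols j h1 h2 (by omega), hlow (j-1) (by omega)]
        exact hc
      · exact Or.inl hj'
      · rcases eq_or_lt_of_le (show b + 1 ≤ j by omega) with hj1 | hj1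
        · exfalso
          apply hb1hatnot
          rw [hj1]
          exact mem_gset.mpr ⟨h1, h2, h3⟩
        · refine Or.inr ⟨by omega, h1, h2, ?_⟩
          intro hc
          apply h3
          rw [hcols j h1 h2 (by omega), hhigh (j-1) (by omega) (by omega)]
          exact hc
    · rintro (rfl | ⟨hne, h1, h2, h3⟩)
      · exact mem_gset.mp hbhatmem
      · refine ⟨h1, h2, ?_⟩
        intro hc
        apply h3
        have hjb : j ≠ b := fun h => hbnot (by rw [← h]; exact mem_gset.mpr ⟨h1, h2, h3⟩)
        rcases lt_trichotomy j b with hj' | hj' | hj'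
        · rw [← hcols j h1 h2 hjb, ← hlow (j-1) (by omega)]
          exact hc
        · exact absurd hj' hjb
        · rw [← hcols j h1 h2 hjb, ← hhigh (j-1) (by omega) (by omega)]
          exact hc
  have hTsys : ∀ j ∈ gset k n A a, bil k (T a) (A j) = if j = a then 1 else 0 :=
    fun j hj => hT a _ (gset_minBasis hper hrank hn a) j hj
  have hsys : ∀ j ∈ gset k n Ahat a, bil k (That a) (Ahat j) = if j = a then 1 else 0 :=
    fun j hj => hThat a _ (gset_minBasis hhatper hhatrank hn a) j hj
  have hThatA : ∀ j ∈ gset k n A a, j ≠ b + 1 →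
      bil k (That a) (A j) = if j = a then 1 else 0 := by
    intro j hj hjb1
    have hjb : j ≠ b := fun h => hbnot (h ▸ hj)
    obtain ⟨h1, h2, _⟩ := mem_gset.mp hj
    have hj' : j ∈ gset k n Ahat a := by
      rw [hgseq]
      exact Finset.mem_insert_of_mem (Finset.mem_erase.mpr ⟨hjb1, hj⟩)
    have := hsys j hj'
    rwa [hcols j h1 h2 hjb] at this
  have hdel0 : ∀ j ∈ gset k n A a, j ≠ b + 1 → bil k (That a - T a) (A j) = 0 := by
    intro j hj hjb1
    rw [bil_sub, hThatA j hj hjb1, hTsys j hj, sub_self]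
  set κ := bil k (That a - T a) (A (b+1)) with hκ
  by_cases hk0 : κ = 0
  · have hzero : That a - T a = 0 := by
      apply eq_zero_of_bil (gset_span hper hrank hn a)
      rintro w ⟨j, hj, rfl⟩
      rw [Finset.mem_coe] at hj
      by_cases hjb1 : j = b + 1
      · rw [hjb1, ← hκ]; exact hk0
      · exact hdel0 j hj hjb1
    rw [hzero]
    exact Submodule.zero_mem _
  · have hπab : π a ≤ b := by
      rcases eq_or_lt_of_le hab with hab' | hab'
      · have hA0 : A a = 0 := by
          have h0 := hbW
          rw [← hab'] at h0
          rw [psp_bot A (by omega)] at h0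
          simpa using h0
        rw [pi_eq_self_of_zero hπ hA0]
        omega
      · by_contra hcon
        push_neg at hcon
        set F := (gset k n A a).filter (fun j => j ≤ b - 1) with hF
        have hWspan : psp k A a (b-1) =
            Submodule.span ℂ (A '' (F : Set ℤ)) := psp_gspan (n := n) A a (b-1) (by omega) (by omega)
        have hjF : ∀ j ∈ F.erase a, j ∈ gset k n A a ∧ j ≤ b - 1 ∧ j ≠ a := by
          intro j hj
          have h1 := Finset.mem_erase.mp hj
          have h2 := Finset.mem_filter.mp h1.2
          exact ⟨h2.1, h2.2, h1.1⟩
        have hFerase : A b ∈ Submodule.span ℂ (A '' ((F.erase a : Finset ℤ) : Set ℤ)) := by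
          by_cases hag : a ∈ gset k n A a
          · have haF : a ∈ F := Finset.mem_filter.mpr ⟨hag, by omega⟩
            have hins : F = insert a (F.erase a) := (Finset.insert_erase haF).symm
            have hbWF : A b ∈ Submodule.span ℂ (A '' (F : Set ℤ)) := hWspan ▸ hbW
            rw [hins, Finset.coe_insert, Set.image_insert_eq] at hbWF
            by_cases hmem : A b ∈ Submodule.span ℂ (A '' ((F.erase a : Finset ℤ) : Set ℤ))
            · exact hmem
            · exfalso
              have hexch := span_exchange hbWF hmem
              have hle : Submodule.span ℂ (insert (A b) (A '' ((F.erase a : Finset ℤ) : Set ℤ))) ≤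
                  Submodule.span ℂ (A '' Set.Ioc a b) := by
                rw [Submodule.span_le]
                rintro w (rfl | ⟨j, hj, rfl⟩)
                · exact Submodule.subset_span ⟨b, by rw [Set.mem_Ioc]; omega, rfl⟩
                · obtain ⟨_, hj2, hj3⟩ := hjF j hj
                  have := (mem_gset.mp (hjF j hj).1).1
                  exact Submodule.subset_span ⟨j, by rw [Set.mem_Ioc]; omega, rfl⟩
              have hπle := (hπ a).2.2.2 b hab (by omega) (hle hexch)
              omega
          · have hFe : F.erase a = F := by
              apply Finset.erase_eq_of_notMem
              intro h
              exact hag (Finset.mem_filter.mp h).1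
            rw [hFe]
            exact hWspan ▸ hbW
        have hkb : bil k (That a) (A b) = 0 := by
          refine bil_span_zero ?_ hFerase
          rintro w ⟨j, hj, rfl⟩
          rw [Finset.mem_coe] at hj
          obtain ⟨hjg, hjle, hja⟩ := hjF j hj
          rw [hThatA j hjg (by omega), if_neg hja]
        have hb0 := hsys b hbhatmem
        rw [hhatb, bil_add_right, bil_smul_right, hkb, zero_add, if_neg (by omega)] at hb0
        have hbb1 : bil k (That a) (A (b+1)) = 0 := by
          rcases mul_eq_zero.mp hb0 with h | h
          · exact absurd h ht
          · exact h
        apply hk0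
        rw [hκ, bil_sub, hbb1, hTsys (b+1) hb1mem, if_neg (by omega), sub_self]
    have hudual : ∀ j ∈ gset k n A a,
        bil k (κ⁻¹ • (That a - T a)) (A j) = if j = b + 1 then 1 else 0 := by
      intro j hj
      rw [bil_smul]
      by_cases hjb1 : j = b + 1
      · rw [if_pos hjb1, hjb1, ← hκ, inv_mul_cancel₀ hk0]
      · rw [if_neg hjb1, hdel0 j hj hjb1, mul_zero]
    have humem := dualU hper hrank hn hπ hT n a (b+1) (by omega) (by omega) hb1mem _ hudual
    have hsub : T '' {q : ℤ | q < a ∧ b + 1 ≤ π q} ⊆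
        T '' {p : ℤ | p < a ∧ a ≤ π a ∧ π a < π p} := by
      apply Set.image_mono
      intro q hq
      obtain ⟨hq1, hq2⟩ := hq
      exact ⟨hq1, (hπ a).1, by omega⟩
    have hfin : That a - T a = κ • (κ⁻¹ • (That a - T a)) := by
      rw [smul_smul, mul_inv_cancel₀ hk0, one_smul]
    rw [hfin]
    exact Submodule.smul_mem _ _ ((Submodule.span_mono hsub) humem)

lemma bridgeAb {k n : ℕ} {A : ℤ → Fin k → ℂ} {π : ℤ → ℤ} (hπ : IsBAP k n A π)
    {c b : ℤ} (hc : π c = b) (hcb : c ≤ b) :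
    A b ∈ psp k A c (b-1) := by
  rcases eq_or_lt_of_le hcb with h | h
  · -- c = b : A c = 0
    have h3 := (hπ c).2.2.1
    rw [hc, ← h, Set.Ioc_self, Set.image_empty, Submodule.span_empty] at h3
    rw [Submodule.mem_bot] at h3
    rw [← h, h3]
    exact Submodule.zero_mem _
  · have hcn : b ≤ c + (n:ℤ) := by
      have := (hπ c).2.1
      omega
    have hmem : A c ∈ psp k A (c+1) b := by
      have := pi_mem hπ c
      rwa [hc] at this
    have hnot : A c ∉ psp k A (c+1) (b-1) :=
      pi_min hπ (by omega) (by omega) (by omega)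
    have hsucc : psp k A (c+1) b =
        Submodule.span ℂ (insert (A b) (A '' Set.Icc (c+1) (b-1))) := by
      have h2 := psp_succ A (a := c+1) (r := b-1) (by omega)
      rwa [show b - 1 + 1 = b by omega] at h2
    rw [hsucc] at hmem
    have hnot' : A c ∉ Submodule.span ℂ (A '' Set.Icc (c+1) (b-1)) := hnot
    have hex := span_exchange hmem hnot'
    rw [psp_insert_bot A (show c ≤ b - 1 by omega), psp_def, ← Submodule.span_insert]
    exact hex

/-- bridge perturbation lemma: let `b ∈ ℤ`, `t ∈ ℂ`, and
suppose there are `c, d` with `π c = b`, `π d = b + 1` and `d < c ≤ b`.  Let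
`Â` be the (periodic) matrix with `Â a = A a` for `a ≢ b (mod n)` and
`Â b = A b + t • A (b+1)`.  Then `Â` has rank `k` and, for every `a`, the
difference `τ→(Â) a − τ→(A) a` lies in `span{τ→(A) p : a ⇒_π p}`. -/
theorem bridge_perturbation
    (k n : ℕ) (hk : 1 ≤ k) (hkn : k ≤ n)
    (A : ℤ → Fin k → ℂ) (hper : ColPeriodic k n A) (hrank : FullRank k A)
    (π : ℤ → ℤ) (hπ : IsBAP k n A π)
    (b : ℤ) (t : ℂ) (c d : ℤ)
    (hc : π c = b) (hd : π d = b + 1) (hdc : d < c) (hcb : c ≤ b)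
    (Ahat : ℤ → Fin k → ℂ) (hhatper : ColPeriodic k n Ahat)
    (hhat : ∀ a : ℤ, (a : ZMod n) ≠ (b : ZMod n) → Ahat a = A a)
    (hhatb : Ahat b = A b + t • A (b + 1))
    (T That : ℤ → Fin k → ℂ)
    (hT : IsRightTwist k n A T) (hThat : IsRightTwist k n Ahat That) :
    FullRank k Ahat ∧
    ∀ a : ℤ, That a - T a ∈
      Submodule.span ℂ (T '' {p : ℤ | p < a ∧ a ≤ π a ∧ π a < π p}) := by
  have hn : 0 < n := lt_of_lt_of_le hk hkn
  have hdn : b + 1 ≤ d + (n:ℤ) := by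
    have := (hπ d).2.1
    omega
  have hn2 : 2 ≤ (n:ℤ) := by omega
  have hhat' : ∀ j : ℤ, ¬ ((n:ℤ) ∣ (j - b)) → Ahat j = A j := by
    intro j hj
    apply hhat
    intro hcast
    apply hj
    have h0 : ((j - b : ℤ) : ZMod n) = 0 := by
      push_cast
      rw [hcast]
      ring
    exact (ZMod.intCast_zmod_eq_zero_iff_dvd _ _).mp h0
  -- full rank of Ahat
  have hb1col : Ahat (b+1) = A (b+1) := by
    apply hhat'
    intro hdvd
    rw [show b + 1 - b = 1 by omega] at hdvd
    have := Int.le_of_dvd (by omega) hdvd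
    omega
  have hhatrank : FullRank k Ahat := by
    rw [FullRank, eq_top_iff, ← hrank, Submodule.span_le]
    rintro v ⟨y, rfl⟩
    by_cases hy : (n:ℤ) ∣ (y - b)
    · obtain ⟨s, hs⟩ := hy
      rw [mul_comm] at hs
      have hyb : A y = A b := by
        have h := per_iter hper s b
        rw [show b + s * (n:ℤ) = y by omega] at h
        exact h
      have hab : A b = Ahat b - t • Ahat (b+1) := by
        rw [hhatb, hb1col]
        module
      rw [hyb, hab]
      exact Submodule.sub_mem _
        (Submodule.subset_span (Set.mem_range_self b))
        (Submodule.smul_mem _ _ (Submodule.subset_span (Set.mem_range_self (b+1))))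
    · rw [← hhat' y hy]
      exact Submodule.subset_span (Set.mem_range_self y)
  refine ⟨hhatrank, ?_⟩
  -- case t = 0 : Ahat = A
  by_cases ht : t = 0
  · have hAA : Ahat = A := by
      funext x
      by_cases hx : (n:ℤ) ∣ (x - b)
      · obtain ⟨s, hs⟩ := hx
        rw [mul_comm] at hs
        have h1 : Ahat x = Ahat b := by
          have h := per_iter hhatper s b
          rw [show b + s * (n:ℤ) = x by omega] at h
          exact h.symm ▸ rfl
        have h2 : A x = A b := by
          have h := per_iter hper s b
          rw [show b + s * (n:ℤ) = x by omega] at h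
          exact h
        rw [h1, h2, hhatb, ht, zero_smul, add_zero]
      · exact hhat' x hx
    intro a
    have hThat' : IsRightTwist k n A That := hAA ▸ hThat
    have : That a = T a := by
      apply twist_eq hper hrank hn hT a
      intro j hj
      exact hThat' a _ (gset_minBasis hper hrank hn a) j hj
    rw [this, sub_self]
    exact Submodule.zero_mem _
  -- t ≠ 0
  -- window columns
  have hcolswin : ∀ a : ℤ, b - (n:ℤ) < a → a ≤ b →
      ∀ j, a ≤ j → j < a + (n:ℤ) → j ≠ b → Ahat j = A j := by
    intro a h1 h2 j hj1 hj2 hjb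
    apply hhat'
    rintro ⟨s, hs⟩
    rw [mul_comm] at hs
    have hs0 : s = 0 := by
      rcases lt_trichotomy s 0 with h | h | h
      · have : s * (n:ℤ) ≤ -1 * (n:ℤ) := mul_le_mul_of_nonneg_right (by omega) (by omega)
        omega
      · exact h
      · have : 1 * (n:ℤ) ≤ s * (n:ℤ) := mul_le_mul_of_nonneg_right (by omega) (by omega)
        omega
    rw [hs0, zero_mul] at hs
    omega
  -- base case on the fundamental window
  have hbase : ∀ a : ℤ, b - (n:ℤ) < a → a ≤ b →
      That a - T a ∈ Submodule.span ℂ (T '' {p : ℤ | p < a ∧ a ≤ π a ∧ π a < π p}) := by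
    intro a ha1 ha2
    have hAb_c : A b ∈ psp k A c (b-1) := bridgeAb hπ hc hcb
    rcases le_or_gt a d with had | had
    · -- Case A : a ≤ d
      have hAb : A b ∈ psp k A a (b-1) := psp_mono_lower A (by omega) hAb_c
      have hAb1_d : A (b+1) ∈ psp k A d b := by
        have := bridgeAb hπ hd (by omega)
        rwa [show b + 1 - 1 = b by omega] at this
      have hAbd : A b ∈ psp k A d (b-1) := psp_mono_lower A (by omega) hAb_c
      have habs : psp k A d b = psp k A d (b-1) := by
        have h := psp_absorb (A := A) (a := d) (r := b - 1) (by omega)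
          (by rw [show b - 1 + 1 = b by omega]; exact hAbd)
        rwa [show b - 1 + 1 = b by omega] at h
      have hAb1 : A (b+1) ∈ psp k A a (b-1) := by
        have h5 : A (b+1) ∈ psp k A d (b-1) := by rw [← habs]; exact hAb1_d
        exact psp_mono_lower A (show a ≤ d by omega) h5
      have heq := caseEQ hper hrank hn hhatper hhatrank hT hThat
        (show a ≤ b by omega) (show b < a + (n:ℤ) by omega)
        (hcolswin a ha1 ha2) hhatb hAb hAb1
      rw [heq, sub_self]
      exact Submodule.zero_mem _
    · -- d < a
      have hba' : b + 1 ≤ a + (n:ℤ) - 1 := by omega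
      by_cases hbW : A b ∈ psp k A a (b-1)
      · by_cases hb1W : A (b+1) ∈ psp k A a (b-1)
        · have heq := caseEQ hper hrank hn hhatper hhatrank hT hThat
            (show a ≤ b by omega) (show b < a + (n:ℤ) by omega)
            (hcolswin a ha1 ha2) hhatb hbW hb1W
          rw [heq, sub_self]
          exact Submodule.zero_mem _
        · exact caseMAIN hper hrank hn hhatper hhatrank hπ hT hThat ht
            (show a ≤ b by omega) hba' (hcolswin a ha1 ha2) hhatb hbW hb1W
      · have hb1notb : A (b+1) ∉ psp k A a b := by
          intro hcmem
          have h1 : A (b+1) ∈ psp k A (d+1) b := psp_mono_lower A (by omega) hcmem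
          have h2 : psp k A (d+1) (b+1) = psp k A (d+1) b :=
            psp_absorb (by omega) (by exact h1)
          have h3 : A d ∈ psp k A (d+1) (b+1) := by
            have := pi_mem hπ d
            rwa [hd] at this
          rw [h2] at h3
          exact pi_min hπ (show d ≤ b by omega) (show b ≤ d + (n:ℤ) by omega)
            (show b < π d by omega) h3
        have heq := caseNE1 hper hrank hn hhatper hhatrank hT hThat
          (show a ≤ b by omega) hba' (hcolswin a ha1 ha2) hhatb hbW hb1notb
        rw [heq, sub_self]
        exact Submodule.zero_mem _
  -- periodic transport
  have hTshift : ∀ x : ℤ, T (x + (n:ℤ)) = T x := twist_shift hper hrank hn hT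
  have hThatshift : ∀ x : ℤ, That (x + (n:ℤ)) = That x :=
    twist_shift hhatper hhatrank hn hThat
  have hπshift : ∀ x : ℤ, π (x + (n:ℤ)) = π x + (n:ℤ) := pi_shift hper hπ
  have hPiff : ∀ x : ℤ,
      (That x - T x ∈ Submodule.span ℂ (T '' {p : ℤ | p < x ∧ x ≤ π x ∧ π x < π p})) ↔
      (That (x + (n:ℤ)) - T (x + (n:ℤ)) ∈
        Submodule.span ℂ (T '' {p : ℤ | p < x + (n:ℤ) ∧ x + (n:ℤ) ≤ π (x + (n:ℤ)) ∧
          π (x + (n:ℤ)) < π p})) := by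
    intro x
    have hset : T '' {p : ℤ | p < x + (n:ℤ) ∧ x + (n:ℤ) ≤ π (x + (n:ℤ)) ∧ π (x + (n:ℤ)) < π p}
        = T '' {p : ℤ | p < x ∧ x ≤ π x ∧ π x < π p} := by
      ext v
      constructor
      · rintro ⟨p, hp, rfl⟩
        obtain ⟨hp1, hp2, hp3⟩ := hp
        rw [hπshift x] at hp2 hp3
        have hπp : π p = π (p - n) + n := by
          have := hπshift (p - n)
          rw [show p - (n:ℤ) + n = p by omega] at this
          omega
        have hTp : T p = T (p - n) := by
          have := hTshift (p - n)
          rw [show p - (n:ℤ) + n = p by omega] at this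
          exact this.symm ▸ rfl
        exact ⟨p - n, ⟨by omega, by omega, by omega⟩, hTp.symm⟩
      · rintro ⟨p, hp, rfl⟩
        obtain ⟨hp1, hp2, hp3⟩ := hp
        refine ⟨p + n, ⟨by omega, ?_, ?_⟩, hTshift p⟩
        · rw [hπshift x]; omega
        · rw [hπshift x, hπshift p]; omega
    rw [hThatshift, hTshift, hset]
  have hall : ∀ (s : ℤ) (x : ℤ), b - (n:ℤ) < x → x ≤ b →
      That (x + s * n) - T (x + s * n) ∈ Submodule.span ℂ
        (T '' {p : ℤ | p < x + s * n ∧ x + s * n ≤ π (x + s * n) ∧ π (x + s * n) < π p}) := by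
    intro s
    induction s using Int.induction_on with
    | zero => intro x h1 h2; simpa using hbase x h1 h2
    | succ s ih =>
        intro x h1 h2
        have hh := (hPiff (x + (s:ℤ) * n)).mp (ih x h1 h2)
        rwa [show x + (s:ℤ) * n + n = x + ((s:ℤ)+1) * n by ring] at hh
    | pred s ih =>
        intro x h1 h2
        have hh := ih x h1 h2
        have h3 := (hPiff (x + (-(s:ℤ)-1) * n)).mpr
        rw [show x + (-(s:ℤ)-1) * n + n = x + (-(s:ℤ)) * n by ring] at h3
        exact h3 hh
  intro a
  set x0 : ℤ := b - n + 1 + (a - (b - n + 1)) % n with hx0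
  set s0 : ℤ := (a - (b - n + 1)) / n with hs0
  have hm1 : 0 ≤ (a - (b - n + 1)) % (n:ℤ) := Int.emod_nonneg _ (by omega)
  have hm2 : (a - (b - n + 1)) % (n:ℤ) < n := Int.emod_lt_of_pos _ (by omega)
  have hdm := Int.mul_ediv_add_emod (a - (b - n + 1)) (n:ℤ)
  have hax : a = x0 + s0 * n := by
    rw [hx0, hs0]
    have : (n:ℤ) * ((a - (b - n + 1)) / n) = ((a - (b - n + 1)) / n) * n := mul_comm _ _
    omega
  have hres := hall s0 x0 (by omega) (by omega)
  rw [← hax] at hres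
  exact hres
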